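/- The polynomial 12x⁴ + 8x³ + 9x² + 6x + 1 has a complex root with strictly positive real part; in particular it is not Hurwitz stable. Moreover, its coefficient sequence (1, 6, 9, 8, 12) is not unimodal. -/

import Mathlib

/-- The cubic `6r³ + r² + 4r + 1` has a real root in `(-1/4, -1/6)`. -/
lemma cubic_root : ∃ r : ℝ, r ∈ Set.Ioo (-(1:ℝ)/4) (-(1:ℝ)/6) ∧
    6 * r ^ 3 + r ^ 2 + 4 * r + 1 = 0 := by
  have hcont : ContinuousOn (fun r : ℝ => 6 * r ^ 3 + r ^ 2 + 4 * r + 1)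
      (Set.Icc (-(1:ℝ)/4) (-(1:ℝ)/6)) := by fun_prop
  have hle : (-(1:ℝ)/4) ≤ (-(1:ℝ)/6) := by norm_num
  have := intermediate_value_Ioo hle hcont
  have h0 : (0:ℝ) ∈ Set.Ioo ((fun r : ℝ => 6 * r ^ 3 + r ^ 2 + 4 * r + 1) (-(1:ℝ)/4))
      ((fun r : ℝ => 6 * r ^ 3 + r ^ 2 + 4 * r + 1) (-(1:ℝ)/6)) := by
    constructor <;> norm_num
  obtain ⟨r, hr, hr0⟩ := this h0
  exact ⟨r, hr, hr0⟩

lemma root_exists : ∃ z : ℂ, 0 < z.re ∧ 12 * z ^ 4 + 8 * z ^ 3 + 9 * z ^ 2 + 6 * z + 1 = 0 := by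
  obtain ⟨r, ⟨hr1, hr2⟩, hr0⟩ := cubic_root
  set D : ℝ := 108 * r ^ 2 + 12 * r + 95 with hD
  have hDpos : 0 < D := by nlinarith [sq_nonneg (18 * r + 1)]
  set s : ℝ := Real.sqrt D with hsdef
  have hs2 : s ^ 2 = D := Real.sq_sqrt hDpos.le
  refine ⟨⟨-(1 + 6 * r) / 12, s / 12⟩, ?_, ?_⟩
  · simp only [Complex.ofReal_re]
    nlinarith
  · set z : ℂ := ⟨-(1 + 6 * r) / 12, s / 12⟩ with hz
    have hzeq : z = (↑(-(1 + 6 * r) / 12) : ℂ) + (↑(s / 12) : ℂ) * Complex.I := by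
      exact hz.trans (Complex.mk_eq_add_mul_I _ _)
    have hsC : ((s : ℂ)) ^ 2 = (D : ℂ) := by exact_mod_cast congrArg (Complex.ofReal ·) hs2
    have hrC : 6 * (r : ℂ) ^ 3 + (r : ℂ) ^ 2 + 4 * (r : ℂ) + 1 = 0 := by
      exact_mod_cast congrArg (Complex.ofReal ·) hr0
    -- quadratic satisfied by z
    have hq : 6 * z ^ 2 + (1 + 6 * (r:ℂ)) * z + (4 + (r:ℂ) + 6 * (r:ℂ) ^ 2) = 0 := by
      rw [hzeq]
      push_cast
      rw [hD] at hsC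
      push_cast at hsC
      linear_combination (Complex.I ^ 2 / 24) * hsC +
        ((24 * (4 + (r:ℂ) + 6 * (r:ℂ)^2) - (1 + 6*(r:ℂ))^2) / 24) * Complex.I_sq
    linear_combination ((2 * z + 1) * (z - (r:ℂ))) * hq + (2 * z + 1) * hrC

theorem stmt18 :
    (∃ z : ℂ, 0 < z.re ∧ 12 * z ^ 4 + 8 * z ^ 3 + 9 * z ^ 2 + 6 * z + 1 = 0) ∧
      ¬ (∀ z : ℂ, 0 < z.re → 12 * z ^ 4 + 8 * z ^ 3 + 9 * z ^ 2 + 6 * z + 1 ≠ 0) ∧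
      ¬ ∃ k : Fin 5,
          (∀ i j : Fin 5, i ≤ j → j ≤ k →
            (![(1 : ℝ), 6, 9, 8, 12]) i ≤ (![(1 : ℝ), 6, 9, 8, 12]) j) ∧
          (∀ i j : Fin 5, k ≤ i → i ≤ j →
            (![(1 : ℝ), 6, 9, 8, 12]) j ≤ (![(1 : ℝ), 6, 9, 8, 12]) i) := by
  obtain ⟨z, hz1, hz2⟩ := root_exists
  refine ⟨⟨z, hz1, hz2⟩, ?_, ?_⟩
  · intro h
    exact h z hz1 hz2
  · rintro ⟨k, h1, h2⟩
    fin_cases k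
    · have := h2 3 4 (by decide) (by decide); change (12:ℝ) ≤ 8 at this; norm_num at this
    · have := h2 3 4 (by decide) (by decide); change (12:ℝ) ≤ 8 at this; norm_num at this
    · have := h2 3 4 (by decide) (by decide); change (12:ℝ) ≤ 8 at this; norm_num at this
    · have := h1 2 3 (by decide) (by decide); change (9:ℝ) ≤ 8 at this; norm_num at this
    · have := h1 2 3 (by decide) (by decide); change (9:ℝ) ≤ 8 at this; norm_num at this
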